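/- Let θ and θ' be dendrograms over a finite set X, viewed (after extension by ∅ on negative reals) as formigrams, and let u_θ, u_θ' be the induced ultrametrics. For each pair x, x' ∈ X, the upper set U_{{x,x'}}(θ) = {(a,b) ∈ Int : x ∼_{⋁_{s∈(a,b)}θ(s)} x'} equals {(a,b) ∈ Int : b > u_θ(x,x')}, and the ℓ∞ Hausdorff distance between U_{{x,x'}}(θ) and U_{{x,x'}}(θ') equals |u_θ(x,x') − u_{θ'}(x,x')|. -/

import Mathlib

/-- The poset `Int = {(a,b) ∈ ℝ² : a < b}` as a subset of the plane. -/
def IntSet : Set (ℝ × ℝ) := {p : ℝ × ℝ | p.1 < p.2}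

/-- The `ℓ∞` distance in the plane. -/
def dinf (p q : ℝ × ℝ) : ℝ := max |p.1 - q.1| |p.2 - q.2|

/-- The `ε`-thickening of `A` inside `Int`, with respect to the `ℓ∞` norm. -/
def thick (A : Set (ℝ × ℝ)) (ε : ℝ) : Set (ℝ × ℝ) :=
  {x ∈ IntSet | ∃ a ∈ A, dinf a x ≤ ε}

/-- The Hausdorff distance in `(Int, ℓ∞)`. -/
noncomputable def hausdorffD (A B : Set (ℝ × ℝ)) : ENNReal :=
  sInf {e : ENNReal | ∃ ε : NNReal, e = (ε : ENNReal) ∧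
    A ⊆ thick B ε ∧ B ⊆ thick A ε}

/-- The ultrametric value induced by a dendrogram `θ` (a `[0,∞)`-indexed monotone
family of partitions of `X`, modelled as `Setoid`s): `u_θ(x,x') = inf{t : x ∼_{θ(t)} x'}`. -/
noncomputable def uDist {X : Type*} (θ : NNReal → Setoid X) (x x' : X) : NNReal :=
  sInf {t : NNReal | (θ t).r x x'}

/-- The upper set `U_{{x,x'}}(θ) ⊆ Int` of a dendrogram `θ` (extended by the empty
subpartition on negative reals): the set of intervals `(a,b)` such that
`x ∼ x'` in `⋁_{s ∈ (a,b)} θ(s)`; since `θ` is a monotone (nested) family, this join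
relates `x` and `x'` iff `x ∼_{θ(s)} x'` for some nonnegative `s ∈ (a,b)`. -/
def uppSet {X : Type*} (θ : NNReal → Setoid X) (x x' : X) : Set (ℝ × ℝ) :=
  {p : ℝ × ℝ | p.1 < p.2 ∧
    ∃ s : NNReal, p.1 < (s : ℝ) ∧ (s : ℝ) < p.2 ∧ (θ s).r x x'}

lemma rel_iff_uDist_le {X : Type*} (θ : NNReal → Setoid X)
    (hmono : Monotone θ)
    (hT : ∃ T : NNReal, 0 < T ∧ ∀ t : NNReal, T ≤ t → θ t = ⊤)
    (hrc : ∀ t : NNReal, ∃ ε : NNReal, 0 < ε ∧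
      ∀ s : NNReal, t ≤ s → s ≤ t + ε → θ s = θ t)
    (x x' : X) : ∀ t : NNReal, (θ t).r x x' ↔ uDist θ x x' ≤ t := by
  obtain ⟨T, _, hTtop⟩ := hT
  have hne : {t : NNReal | (θ t).r x x'}.Nonempty :=
    ⟨T, by show (θ T).r x x'; rw [hTtop T le_rfl]; trivial⟩
  have hmem : (θ (uDist θ x x')).r x x' := by
    obtain ⟨ε, hε, hεeq⟩ := hrc (uDist θ x x')
    have hlt : sInf {t : NNReal | (θ t).r x x'} < uDist θ x x' + ε := by
      exact lt_of_le_of_lt le_rfl (by exact lt_add_of_pos_right _ hε)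
    obtain ⟨t, ht, htlt⟩ := exists_lt_of_csInf_lt hne hlt
    have h1 : uDist θ x x' ≤ t := csInf_le (OrderBot.bddBelow _) ht
    have := hεeq t h1 htlt.le
    rwa [← this]
  intro t
  constructor
  · intro h; exact csInf_le (OrderBot.bddBelow _) h
  · intro h; exact hmono h hmem

lemma uppSet_eq {X : Type*} (θ : NNReal → Setoid X)
    (hmono : Monotone θ)
    (hT : ∃ T : NNReal, 0 < T ∧ ∀ t : NNReal, T ≤ t → θ t = ⊤)
    (hrc : ∀ t : NNReal, ∃ ε : NNReal, 0 < ε ∧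
      ∀ s : NNReal, t ≤ s → s ≤ t + ε → θ s = θ t)
    (x x' : X) :
    uppSet θ x x' = {p : ℝ × ℝ | p.1 < p.2 ∧ ((uDist θ x x' : ℝ) < p.2)} := by
  have hiff := rel_iff_uDist_le θ hmono hT hrc x x'
  set u := uDist θ x x'
  ext p
  simp only [uppSet, Set.mem_setOf_eq]
  constructor
  · rintro ⟨h1, s, _, hs2, hrel⟩
    exact ⟨h1, lt_of_le_of_lt (by exact_mod_cast (hiff s).mp hrel) hs2⟩
  · rintro ⟨h1, h2⟩
    refine ⟨h1, ?_⟩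
    set c : ℝ := (max p.1 (u : ℝ) + p.2) / 2 with hc
    have hmaxlt : max p.1 (u : ℝ) < p.2 := max_lt h1 h2
    have hc1 : max p.1 (u : ℝ) < c := by rw [hc]; linarith
    have hc2 : c < p.2 := by rw [hc]; linarith
    have hc0 : (0:ℝ) ≤ c := le_trans (u.coe_nonneg) (le_trans (le_max_right _ _) hc1.le)
    refine ⟨c.toNNReal, ?_, ?_, ?_⟩
    · rw [Real.coe_toNNReal _ hc0]; exact lt_of_le_of_lt (le_max_left _ _) hc1
    · rw [Real.coe_toNNReal _ hc0]; exact hc2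
    · apply (hiff _).mpr
      rw [← NNReal.coe_le_coe, Real.coe_toNNReal _ hc0]
      exact le_trans (le_max_right _ _) hc1.le

lemma subset_thick_of_le (u v : NNReal) (ε : NNReal) (h : (v:ℝ) - u ≤ ε) :
    {p : ℝ × ℝ | p.1 < p.2 ∧ ((u:ℝ) < p.2)} ⊆
      thick {p : ℝ × ℝ | p.1 < p.2 ∧ ((v:ℝ) < p.2)} ε := by
  rintro p ⟨h1, h2⟩
  refine ⟨h1, (p.1, p.2 + max ((v:ℝ) - u) 0), ⟨?_, ?_⟩, ?_⟩
  · simp only; have := le_max_right ((v:ℝ) - u) 0; linarith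
  · simp only
    rcases le_or_gt (v:ℝ) (u:ℝ) with hvu | hvu
    · have := le_max_right ((v:ℝ) - u) 0; linarith
    · have : max ((v:ℝ) - u) 0 = (v:ℝ) - u := max_eq_left (by linarith)
      rw [this]; linarith
  · simp only [dinf, sub_self, abs_zero]
    have h0 : max ((v:ℝ) - u) 0 ≤ ε := max_le h ε.coe_nonneg
    have : |p.2 + max ((v:ℝ) - u) 0 - p.2| = max ((v:ℝ) - u) 0 := by
      rw [add_sub_cancel_left]; exact abs_of_nonneg (le_max_right _ _)
    rw [this]
    exact max_le ε.coe_nonneg h0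

lemma le_of_subset_thick (u v : NNReal) (ε : NNReal)
    (h : {p : ℝ × ℝ | p.1 < p.2 ∧ ((u:ℝ) < p.2)} ⊆
      thick {p : ℝ × ℝ | p.1 < p.2 ∧ ((v:ℝ) < p.2)} ε) :
    (v:ℝ) - u ≤ ε := by
  by_contra hlt
  push_neg at hlt
  set δ : ℝ := ((v:ℝ) - u - ε) / 2 with hδ
  have hδpos : 0 < δ := by rw [hδ]; linarith
  have hp : ((u:ℝ) - 1, (u:ℝ) + δ) ∈ {p : ℝ × ℝ | p.1 < p.2 ∧ ((u:ℝ) < p.2)} := by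
    constructor <;> simp only <;> linarith
  obtain ⟨-, a, ⟨-, hav⟩, hd⟩ := h hp
  have h2 : |a.2 - ((u:ℝ) + δ)| ≤ ε := le_trans (le_max_right _ _) hd
  have := abs_le.mp h2
  have : a.2 ≤ (u:ℝ) + δ + ε := by linarith [this.2]

  rw [hδ] at this
  linarith

lemma haus_eq (u v : NNReal) :
    hausdorffD {p : ℝ × ℝ | p.1 < p.2 ∧ ((u:ℝ) < p.2)}
      {p : ℝ × ℝ | p.1 < p.2 ∧ ((v:ℝ) < p.2)} =
      ENNReal.ofReal |(u:ℝ) - (v:ℝ)| := by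
  apply le_antisymm
  · apply sInf_le
    refine ⟨Real.toNNReal |(u:ℝ) - (v:ℝ)|, ?_, ?_, ?_⟩
    · rw [ENNReal.ofReal]
    · apply subset_thick_of_le
      rw [Real.coe_toNNReal _ (abs_nonneg _)]
      have : (v:ℝ) - u ≤ |(u:ℝ) - (v:ℝ)| := by
        rw [abs_sub_comm]; exact le_abs_self _
      exact this
    · apply subset_thick_of_le
      rw [Real.coe_toNNReal _ (abs_nonneg _)]
      exact le_abs_self _
  · apply le_sInf
    rintro e ⟨ε, rfl, h1, h2⟩
    have ha : (v:ℝ) - u ≤ ε := le_of_subset_thick u v ε h1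
    have hb : (u:ℝ) - v ≤ ε := le_of_subset_thick v u ε h2
    have : |(u:ℝ) - (v:ℝ)| ≤ ε := abs_le.mpr ⟨by linarith, hb⟩
    calc ENNReal.ofReal |(u:ℝ) - (v:ℝ)| ≤ ENNReal.ofReal (ε:ℝ) := ENNReal.ofReal_le_ofReal this
      _ = (ε : ENNReal) := ENNReal.ofReal_coe_nnreal


/-- For dendrograms `θ, θ'` over a finite set `X` with induced ultrametrics
`u_θ, u_θ'`, the upper set `U_{{x,x'}}(θ)` equals `{(a,b) ∈ Int : b > u_θ(x,x')}`,
and the `ℓ∞` Hausdorff distance between `U_{{x,x'}}(θ)` and `U_{{x,x'}}(θ')` equals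
`|u_θ(x,x') − u_θ'(x,x')|`. -/
theorem dendrogram_upper_sets {X : Type*} [Finite X]
    (θ θ' : NNReal → Setoid X)
    (hmono : Monotone θ) (h0 : θ 0 = ⊥)
    (hT : ∃ T : NNReal, 0 < T ∧ ∀ t : NNReal, T ≤ t → θ t = ⊤)
    (hrc : ∀ t : NNReal, ∃ ε : NNReal, 0 < ε ∧
      ∀ s : NNReal, t ≤ s → s ≤ t + ε → θ s = θ t)
    (hmono' : Monotone θ') (h0' : θ' 0 = ⊥)
    (hT' : ∃ T : NNReal, 0 < T ∧ ∀ t : NNReal, T ≤ t → θ' t = ⊤)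
    (hrc' : ∀ t : NNReal, ∃ ε : NNReal, 0 < ε ∧
      ∀ s : NNReal, t ≤ s → s ≤ t + ε → θ' s = θ' t)
    (x x' : X) :
    uppSet θ x x' =
      {p : ℝ × ℝ | p.1 < p.2 ∧ ((uDist θ x x' : ℝ) < p.2)} ∧
    hausdorffD (uppSet θ x x') (uppSet θ' x x') =
      ENNReal.ofReal |(uDist θ x x' : ℝ) - (uDist θ' x x' : ℝ)| := by
  have e1 := uppSet_eq θ hmono hT hrc x x'
  have e2 := uppSet_eq θ' hmono' hT' hrc' x x'
  refine ⟨e1, ?_⟩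
  rw [e1, e2, haus_eq]
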